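/- (Matrix estimate for a row operation.) Fix nonnegative integers q,r,s,t and rationals r', s' with r' + s' = r + s. Let R = O_{F,[0,p^{-1/m}]} with valuation v_R and H_v = {f : v_R(f) ≥ v}. Let D ∈ M_2(R) with entries D_{11} ∈ H_{r'+γ}, D_{12} ∈ H_{r+γ}, D_{21} ∈ H_{s+γ}, D_{22} ∈ H_{s'+γ} for some γ > 0. Suppose n ≥ 0 satisfies n(p-1) + r' - s' ≥ 0 and f ∈ H_{r'-s+γ'} ∩ u^n R with γ' > 0. Then, writing A = [[1,-f],[0,1]] and A *_φ D := A D φ(A)^{-1} (φ the Frobenius u ↦ u^p applied entrywise), the difference A *_φ D - D has (1,1)-entry in H_{r'+γ+γ'}, (1,2)-entry in H_{r+γ+γ'}, (2,1)-entry equal to 0, and (2,2)-entry in H_{r'+γ+n(p-1)+γ'} ⊆ H_{s'+γ+γ'}. -/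

import Mathlib

open PowerSeries Filter

noncomputable section

/-- `Hge m vp v f` says the Gauss valuation `v_R(f) = min_i (i + m * vp (a_i))` is `≥ v`. -/
def Hge {F : Type*} [Field F] (m : ℝ) (vp : F → ℝ) (v : ℝ) (f : PowerSeries F) : Prop :=
  ∀ i : ℕ, (PowerSeries.coeff (R := F) i) f ≠ 0 → v ≤ (i : ℝ) + m * vp ((PowerSeries.coeff (R := F) i) f)

/-- `vReq m vp f v` says `v_R(f) = v`: it is a lower bound and it is attained. -/
def vReq {F : Type*} [Field F] (m : ℝ) (vp : F → ℝ) (f : PowerSeries F) (v : ℝ) : Prop :=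
  Hge m vp v f ∧ ∃ i : ℕ, (PowerSeries.coeff (R := F) i) f ≠ 0 ∧
    (i : ℝ) + m * vp ((PowerSeries.coeff (R := F) i) f) = v

/-- membership in `R = O_{F,[0,p^{-1/m}]}`: `i + m * vp (a_i) → ∞`. -/
def MemR {F : Type*} [Field F] (m : ℝ) (vp : F → ℝ) (f : PowerSeries F) : Prop :=
  ∀ N : ℝ, ∀ᶠ i : ℕ in Filter.atTop,
    (PowerSeries.coeff (R := F) i) f = 0 ∨ N ≤ (i : ℝ) + m * vp ((PowerSeries.coeff (R := F) i) f)

/-- The Frobenius `φ` on power series: substitution `u ↦ u^p`. -/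
def phiF {F : Type*} [Field F] (p : ℕ) (f : PowerSeries F) : PowerSeries F :=
  PowerSeries.mk fun n => if p ∣ n then (PowerSeries.coeff (R := F) (n / p)) f else 0

/-- Formal derivative `d/du` of a power series. -/
def dWrt {F : Type*} [Field F] (f : PowerSeries F) : PowerSeries F :=
  PowerSeries.mk fun n => ((n : F) + 1) * (PowerSeries.coeff (R := F) (n + 1)) f


section Aux
variable {F : Type*} [Field F] (m : ℝ) (vp : F → ℝ)

lemma vp_sum (hvp_add : ∀ x y : F, x ≠ 0 → y ≠ 0 → x + y ≠ 0 → min (vp x) (vp y) ≤ vp (x + y))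
    (c : ℝ) {ι : Type*} (s : Finset ι) (x : ι → F)
    (h : ∀ i ∈ s, x i ≠ 0 → c ≤ vp (x i)) (hs : (∑ i ∈ s, x i) ≠ 0) :
    c ≤ vp (∑ i ∈ s, x i) := by
  induction s using Finset.cons_induction with
  | empty => simp at hs
  | cons a s ha ih =>
    rw [Finset.sum_cons] at hs ⊢
    by_cases h1 : x a = 0
    · rw [h1, zero_add] at hs ⊢
      exact ih (fun i hi => h i (Finset.mem_cons_of_mem hi)) hs
    by_cases h2 : (∑ i ∈ s, x i) = 0
    · rw [h2, add_zero] at hs ⊢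
      exact h a (Finset.mem_cons_self a s) h1
    have := hvp_add _ _ h1 h2 hs
    have hc1 := h a (Finset.mem_cons_self a s) h1
    have hc2 := ih (fun i hi => h i (Finset.mem_cons_of_mem hi)) h2
    exact le_trans (le_min hc1 hc2) this

lemma Hge_mul (hm : (0:ℝ) < m)
    (hvp_mul : ∀ x y : F, x ≠ 0 → y ≠ 0 → vp (x * y) = vp x + vp y)
    (hvp_add : ∀ x y : F, x ≠ 0 → y ≠ 0 → x + y ≠ 0 → min (vp x) (vp y) ≤ vp (x + y))
    {a b : ℝ} {f g : PowerSeries F} (hf : Hge m vp a f) (hg : Hge m vp b g) :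
    Hge m vp (a + b) (f * g) := by
  intro k hk
  rw [PowerSeries.coeff_mul] at hk ⊢
  have : (a + b - k) / m ≤ vp (∑ p ∈ Finset.HasAntidiagonal.antidiagonal k, coeff (R := F) p.1 f * coeff (R := F) p.2 g) := by
    refine vp_sum vp hvp_add _ _ _ ?_ hk
    rintro ⟨i, j⟩ hij hne
    have hij' : i + j = k := Finset.HasAntidiagonal.mem_antidiagonal.mp hij
    have hi : coeff (R := F) i f ≠ 0 := fun h => hne (by simp [h])
    have hj : coeff (R := F) j g ≠ 0 := fun h => hne (by simp [h])
    rw [hvp_mul _ _ hi hj]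
    have h1 := hf i hi
    have h2 := hg j hj
    rw [div_le_iff₀ hm]
    have : ((i:ℝ) + j) = (k:ℝ) := by exact_mod_cast congrArg Nat.cast hij'
    nlinarith
  rw [div_le_iff₀ hm] at this
  linarith

lemma Hge_add (hm : (0:ℝ) < m)
    (hvp_add : ∀ x y : F, x ≠ 0 → y ≠ 0 → x + y ≠ 0 → min (vp x) (vp y) ≤ vp (x + y))
    {v : ℝ} {f g : PowerSeries F} (hf : Hge m vp v f) (hg : Hge m vp v g) :
    Hge m vp v (f + g) := by
  intro i hi
  rw [map_add] at hi ⊢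
  by_cases h1 : coeff (R := F) i f = 0
  · rw [h1, zero_add] at hi ⊢; exact hg i hi
  by_cases h2 : coeff (R := F) i g = 0
  · rw [h2, add_zero] at hi ⊢; exact hf i hi
  have hmin := hvp_add _ _ h1 h2 hi
  have ha := hf i h1
  have hb := hg i h2
  rcases min_le_iff.mp (le_refl (min (vp (coeff (R := F) i f)) (vp (coeff (R := F) i g)))) with h | h
  all_goals nlinarith [min_le_left (vp (coeff (R := F) i f)) (vp (coeff (R := F) i g)),
    min_le_right (vp (coeff (R := F) i f)) (vp (coeff (R := F) i g))]

lemma Hge_neg (hvp_mul : ∀ x y : F, x ≠ 0 → y ≠ 0 → vp (x * y) = vp x + vp y)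
    {v : ℝ} {f : PowerSeries F} (hf : Hge m vp v f) : Hge m vp v (-f) := by
  have h1 : vp (-1 : F) = 0 := by
    have := hvp_mul (-1) (-1) (by norm_num) (by norm_num)
    simp only [neg_mul_neg, one_mul] at this
    have h0 : vp (1 : F) = 0 := by
      have := hvp_mul 1 1 one_ne_zero one_ne_zero
      simp only [one_mul] at this; linarith
    rw [h0] at this; linarith
  intro i hi
  rw [map_neg] at hi ⊢
  have hne : coeff (R := F) i f ≠ 0 := fun h => hi (by simp [h])
  have : vp (-(coeff (R := F) i f)) = vp (coeff (R := F) i f) := by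
    rw [show -(coeff (R := F) i f) = (-1) * coeff (R := F) i f by ring, hvp_mul _ _ (by norm_num) hne, h1,
      zero_add]
  rw [this]; exact hf i hne

lemma Hge_mono {v v' : ℝ} (h : v' ≤ v) {f : PowerSeries F} (hf : Hge m vp v f) :
    Hge m vp v' f := fun i hi => le_trans h (hf i hi)

lemma Hge_phi {p n : ℕ} (hp : 1 ≤ p) {v : ℝ} {f : PowerSeries F}
    (hf : Hge m vp v f) (hn : ∀ i, coeff (R := F) i f ≠ 0 → n ≤ i) :
    Hge m vp (v + (n:ℝ) * ((p:ℝ) - 1)) (phiF p f) := by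
  intro k hk
  rw [phiF, PowerSeries.coeff_mk] at hk ⊢
  by_cases hd : p ∣ k
  · rw [if_pos hd] at hk ⊢
    obtain ⟨j, rfl⟩ := hd
    rw [Nat.mul_div_cancel_left j (by omega)] at hk ⊢
    have h1 := hf j hk
    have h2 := hn j hk
    have hpn : ((p:ℝ) - 1) ≥ 0 := by
      have : (1:ℝ) ≤ p := by exact_mod_cast hp
      linarith
    have h3 : ((n:ℝ)) ≤ j := by exact_mod_cast h2
    have hc : ((p * j : ℕ) : ℝ) = (p:ℝ) * j := by push_cast; ring
    rw [hc]
    nlinarith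
  · rw [if_neg hd] at hk; exact absurd rfl hk

end Aux

/-- matrix estimate for the row operation `D ↦ A D φ(A)⁻¹`
with `A = [[1,-f],[0,1]]`, so `φ(A)⁻¹ = [[1,φ(f)],[0,1]]`. -/
theorem stmt_12 {F : Type*} [Field F] (p : ℕ) (hp : p.Prime) (m : ℝ) (hm : 1 < m)
    (vp : F → ℝ)
    (hvp_mul : ∀ x y : F, x ≠ 0 → y ≠ 0 → vp (x * y) = vp x + vp y)
    (hvp_add : ∀ x y : F, x ≠ 0 → y ≠ 0 → x + y ≠ 0 → min (vp x) (vp y) ≤ vp (x + y))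
    (q r s t : ℕ) (r' s' : ℝ) (hsum : r' + s' = (r : ℝ) + s)
    (γ γ' : ℝ) (hγ : 0 < γ) (hγ' : 0 < γ')
    (D : Matrix (Fin 2) (Fin 2) (PowerSeries F))
    (hD11 : Hge m vp (r' + γ) (D 0 0)) (hD12 : Hge m vp ((r : ℝ) + γ) (D 0 1))
    (hD21 : Hge m vp ((s : ℝ) + γ) (D 1 0)) (hD22 : Hge m vp (s' + γ) (D 1 1))
    (n : ℕ) (hn : 0 ≤ (n : ℝ) * ((p : ℝ) - 1) + r' - s')
    (f : PowerSeries F) (hf : Hge m vp (r' - (s : ℝ) + γ') f)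
    (hfd : (PowerSeries.X : PowerSeries F) ^ n ∣ f) :
    let M := (!![1, -f; 0, 1] : Matrix (Fin 2) (Fin 2) (PowerSeries F)) * D *
      !![1, phiF p f; 0, 1]
    Hge m vp (r' + γ + γ') ((M - D) 0 0) ∧
      Hge m vp ((r : ℝ) + γ + γ') ((M - D) 0 1) ∧
      (M - D) 1 0 = 0 ∧
      Hge m vp (r' + γ + (n : ℝ) * ((p : ℝ) - 1) + γ') ((M - D) 1 1) ∧
      Hge m vp (s' + γ + γ') ((M - D) 1 1) := by
  intro M
  have hm0 : (0:ℝ) < m := by linarith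
  have hp1 : 1 ≤ p := hp.one_le
  have hpR : (1:ℝ) ≤ p := by exact_mod_cast hp1
  -- coefficients of f vanish below n
  have hfc : ∀ i, coeff (R := F) i f ≠ 0 → n ≤ i := by
    intro i hi
    by_contra hlt
    exact hi (PowerSeries.X_pow_dvd_iff.mp hfd i (by omega))
  -- valuation of phiF p f
  have hφ : Hge m vp ((r' - (s : ℝ) + γ') + (n:ℝ) * ((p:ℝ) - 1)) (phiF p f) :=
    Hge_phi m vp hp1 hf hfc
  -- entry formulas
  have e00 : (M - D) 0 0 = -(f * D 1 0) := by
    simp [M, Matrix.mul_apply, Matrix.vecMul, dotProduct, Fin.sum_univ_two,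
      Matrix.sub_apply] <;> ring
  have e01 : (M - D) 0 1 = (D 0 0 * phiF p f + -(f * D 1 0) * phiF p f) + -(f * D 1 1) := by
    simp [M, Matrix.mul_apply, Matrix.vecMul, dotProduct, Fin.sum_univ_two,
      Matrix.sub_apply] <;> ring
  have e10 : (M - D) 1 0 = 0 := by
    simp [M, Matrix.mul_apply, Matrix.vecMul, dotProduct, Fin.sum_univ_two,
      Matrix.sub_apply] <;> ring
  have e11 : (M - D) 1 1 = D 1 0 * phiF p f := by
    simp [M, Matrix.mul_apply, Matrix.vecMul, dotProduct, Fin.sum_univ_two,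
      Matrix.sub_apply] <;> ring
  refine ⟨?_, ?_, e10, ?_, ?_⟩
  · rw [e00]
    exact Hge_mono m vp (by linarith)
      (Hge_neg m vp hvp_mul (Hge_mul m vp hm0 hvp_mul hvp_add hf hD21))
  · rw [e01]
    have t1 : Hge m vp ((r:ℝ) + γ + γ') (D 0 0 * phiF p f) :=
      Hge_mono m vp (by nlinarith) (Hge_mul m vp hm0 hvp_mul hvp_add hD11 hφ)
    have t2 : Hge m vp ((r:ℝ) + γ + γ') (-(f * D 1 0) * phiF p f) := by
      have := Hge_mul m vp hm0 hvp_mul hvp_add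
        (Hge_neg m vp hvp_mul (Hge_mul m vp hm0 hvp_mul hvp_add hf hD21)) hφ
      exact Hge_mono m vp (by nlinarith) this
    have t3 : Hge m vp ((r:ℝ) + γ + γ') (-(f * D 1 1)) :=
      Hge_mono m vp (by linarith)
        (Hge_neg m vp hvp_mul (Hge_mul m vp hm0 hvp_mul hvp_add hf hD22))
    exact Hge_add m vp hm0 hvp_add (Hge_add m vp hm0 hvp_add t1 t2) t3
  · rw [e11]
    exact Hge_mono m vp (by linarith) (Hge_mul m vp hm0 hvp_mul hvp_add hD21 hφ)
  · rw [e11]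
    exact Hge_mono m vp (by linarith) (Hge_mul m vp hm0 hvp_mul hvp_add hD21 hφ)
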